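/- Let f : ℝ → ℝ be continuous with antiderivative F, and let g be a bounded nonconstant C² solution of g'' + f(g) = 0 on ℝ that is strictly increasing, with limits g₋ < g₊ at ∓∞. Set C = F(g₋). Then F(g₊) = F(g₋) and F(s) ≤ C for all s ∈ [g₋, g₊]; i.e. W(s) := C - F(s) is a nonnegative potential on [g₋, g₊] vanishing exactly at the endpoints where g' = 0. -/

import Mathlib

open Filter

theorem double_well_structure
    (f F g : ℝ → ℝ) (hf : Continuous f)
    (hF : ∀ s, HasDerivAt F (f s) s)
    (hg : ContDiff ℝ 2 g)
    (hode : ∀ t, deriv (deriv g) t + f (g t) = 0)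
    (hbdd : ∃ M : ℝ, ∀ t, |g t| ≤ M)
    (hmono : StrictMono g)
    (gm gp : ℝ) (hgm : Tendsto g atBot (nhds gm)) (hgp : Tendsto g atTop (nhds gp))
    (hlt : gm < gp) :
    F gp = F gm ∧ ∀ s ∈ Set.Icc gm gp, F s ≤ F gm := by
  have hgdiff : Differentiable ℝ g := hg.differentiable (by norm_num)
  have hg2 : ContDiff ℝ ((1:ℕ∞)+1) g := by exact_mod_cast hg
  have hderiv_diff : Differentiable ℝ (deriv g) :=
    ((contDiff_succ_iff_deriv.mp hg2).2.2).differentiable (by simp)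
  have hFc : Continuous F := by
    rw [continuous_iff_continuousAt]; exact fun s => (hF s).continuousAt
  have hgc : Continuous g := hgdiff.continuous
  -- energy
  have hE' : ∀ t, HasDerivAt (fun t => (deriv g t)^2 / 2 + F (g t)) 0 t := by
    intro t
    have hgd : HasDerivAt g (deriv g t) t := (hgdiff t).hasDerivAt
    have hgd2 : HasDerivAt (deriv g) (deriv (deriv g) t) t := (hderiv_diff t).hasDerivAt
    have h1 : HasDerivAt (fun t => (deriv g t)^2 / 2)
        ((2 * deriv g t ^ 1 * deriv (deriv g) t) / 2) t := (hgd2.pow 2).div_const 2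
    have h2 : HasDerivAt (fun t => F (g t)) (f (g t) * deriv g t) t :=
      (hF (g t)).comp t hgd
    have := h1.add h2
    refine HasDerivAt.congr_deriv this ?_
    have hode' : deriv (deriv g) t = - f (g t) := by linarith [hode t]
    rw [hode']; ring
  obtain ⟨C, hEt⟩ : ∃ C, ∀ t, (deriv g t)^2 / 2 + F (g t) = C :=
    ⟨_, fun t => is_const_of_deriv_eq_zero (fun x => (hE' x).differentiableAt)
      (fun x => (hE' x).deriv) t 0⟩
  have hle : ∀ t, F (g t) ≤ C := by
    intro t
    have h := hEt t
    have h2 := sq_nonneg (deriv g t)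
    linarith
  -- MVT points near -infty
  have hmvt : ∀ (u v : ℝ), u < v → ∃ c ∈ Set.Ioo u v, deriv g c = (g v - g u) / (v - u) := by
    intro u v huv
    exact exists_deriv_eq_slope g huv hgc.continuousOn (hgdiff.differentiableOn)
  have hCm : C = F gm := by
    choose c hc hdc using fun n : ℕ => hmvt (-(n:ℝ)-1) (-(n:ℝ)) (by linarith)
    have hc_le : ∀ n : ℕ, c n ≤ -(n:ℝ) := fun n => (hc n).2.le
    have hc_bot : Tendsto c atTop atBot :=
      tendsto_atBot_mono hc_le (tendsto_neg_atBot_iff.mpr tendsto_natCast_atTop_atTop)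
    have hgcm : Tendsto (fun n => g (c n)) atTop (nhds gm) := hgm.comp hc_bot
    have hdc0 : Tendsto (fun n => deriv g (c n)) atTop (nhds 0) := by
      have h1 : Tendsto (fun n : ℕ => g (-(n:ℝ))) atTop (nhds gm) :=
        hgm.comp (tendsto_neg_atBot_iff.mpr tendsto_natCast_atTop_atTop)
      have h2 : Tendsto (fun n : ℕ => g (-(n:ℝ)-1)) atTop (nhds gm) := by
        refine hgm.comp (tendsto_atBot_mono (fun n : ℕ => ?_)
          (tendsto_neg_atBot_iff.mpr tendsto_natCast_atTop_atTop))
        linarith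
      have heq : ∀ n : ℕ, deriv g (c n) = g (-(n:ℝ)) - g (-(n:ℝ)-1) := fun n => by
        have h1' : (-(n:ℝ) - (-(n:ℝ)-1)) = 1 := by ring
        rw [hdc n, h1', div_one]
      simpa using (h1.sub h2).congr fun n => (heq n).symm
    have : Tendsto (fun n => (deriv g (c n))^2/2 + F (g (c n))) atTop (nhds (0^2/2 + F gm)) :=
      (((hdc0.pow 2).div_const 2)).add (hFc.continuousAt.tendsto.comp hgcm)
    have h0 : Tendsto (fun _ : ℕ => C) atTop (nhds (0^2/2 + F gm)) := by
      refine this.congr fun n => hEt (c n)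
    have := tendsto_nhds_unique h0 tendsto_const_nhds
    simpa using this.symm
  have hCp : C = F gp := by
    choose c hc hdc using fun n : ℕ => hmvt ((n:ℝ)) ((n:ℝ)+1) (by linarith)
    have hc_ge : ∀ n : ℕ, (n:ℝ) ≤ c n := fun n => (hc n).1.le
    have hc_top : Tendsto c atTop atTop := tendsto_atTop_mono hc_ge tendsto_natCast_atTop_atTop
    have hgcp : Tendsto (fun n => g (c n)) atTop (nhds gp) := hgp.comp hc_top
    have hdc0 : Tendsto (fun n => deriv g (c n)) atTop (nhds 0) := by
      have h1 : Tendsto (fun n : ℕ => g ((n:ℝ))) atTop (nhds gp) :=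
        hgp.comp tendsto_natCast_atTop_atTop
      have h2 : Tendsto (fun n : ℕ => g ((n:ℝ)+1)) atTop (nhds gp) := by
        refine hgp.comp (tendsto_atTop_mono (fun n : ℕ => ?_) tendsto_natCast_atTop_atTop)
        linarith
      have heq : ∀ n : ℕ, deriv g (c n) = g ((n:ℝ)+1) - g ((n:ℝ)) := fun n => by
        have h1' : (((n:ℝ)+1) - (n:ℝ)) = 1 := by ring
        rw [hdc n, h1', div_one]
      simpa using (h2.sub h1).congr fun n => (heq n).symm
    have : Tendsto (fun n => (deriv g (c n))^2/2 + F (g (c n))) atTop (nhds (0^2/2 + F gp)) :=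
      (((hdc0.pow 2).div_const 2)).add (hFc.continuousAt.tendsto.comp hgcp)
    have h0 : Tendsto (fun _ : ℕ => C) atTop (nhds (0^2/2 + F gp)) :=
      this.congr fun n => hEt (c n)
    have := tendsto_nhds_unique h0 tendsto_const_nhds
    simpa using this.symm
  constructor
  · rw [← hCm, ← hCp]
  · intro s hs
    rcases eq_or_lt_of_le hs.1 with h1 | h1
    · rw [← h1]
    rcases eq_or_lt_of_le hs.2 with h2 | h2
    · rw [h2, ← hCm, ← hCp]
    -- s in (gm, gp): s in range g
    obtain ⟨t1, ht1⟩ : ∃ t, g t < s := by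
      have := hgm.eventually (gt_mem_nhds h1)
      exact this.exists
    obtain ⟨t2, ht2⟩ : ∃ t, s < g t := by
      have := hgp.eventually (lt_mem_nhds h2)
      exact this.exists
    have ht12 : t1 ≤ t2 := le_of_lt (hmono.lt_iff_lt.mp (lt_trans ht1 ht2))
    obtain ⟨t, _, hts⟩ := intermediate_value_Icc ht12 hgc.continuousOn ⟨ht1.le, ht2.le⟩
    rw [← hts, ← hCm] at *
    exact hle t
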